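/- Suppose D_hid ≥ kd + 4. For any k ≥ 1, there exists a masked attention layer with k+1 heads such that for every N ≥ k and every input H ∈ ℝ^{D_hid×N} of the dynamical input format, the output Attn(H) has i-th column equal to [x̄_i; p̄_i] = [x_{i−k+1}; …; x_{i−1}; x_i; p̄_i] for all i ∈ [N], where p̄_i differs from p_i only in the dimension of its zero padding; that is, the layer copies the k−1 previous tokens x_{i−k+1}, …, x_{i−1} onto the i-th token (with the convention x_j := 0_d for j ≤ 0). -/

import Mathlib

open scoped BigOperators Matrix

noncomputable section

/-- The ReLU activation. -/
def relu (t : ℝ) : ℝ := max t 0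

/-- Entrywise ReLU on vectors. -/
def reluV {n : ℕ} (v : Fin n → ℝ) : Fin n → ℝ := fun i => relu (v i)

/-- Leaky ReLU with slope `ρ`. -/
def lrelu (ρ t : ℝ) : ℝ := max t (ρ * t)

/-- Entrywise leaky ReLU. -/
def lreluV (ρ : ℝ) {n : ℕ} (v : Fin n → ℝ) : Fin n → ℝ := fun i => lrelu ρ (v i)

/-- Euclidean (ℓ2) norm of a vector in `ℝ^n`. -/
def l2norm {n : ℕ} (v : Fin n → ℝ) : ℝ := Real.sqrt (∑ i, (v i) ^ 2)

/-- An attention head: (query, key, value) matrices. -/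
structure AttnHead (Dhid : ℕ) where
  Q : Matrix (Fin Dhid) (Fin Dhid) ℝ
  K : Matrix (Fin Dhid) (Fin Dhid) ℝ
  V : Matrix (Fin Dhid) (Fin Dhid) ℝ

/-- Masked attention layer with the normalized-ReLU activation.  Tokens are the
columns `H i`, indexed 0-based (math index `i+1`), so the normalization is
`1/(i+1)` and keys range over `j ≤ i`. -/
def attnLayer {Dhid Mh : ℕ} (heads : Fin Mh → AttnHead Dhid) {M : ℕ}
    (H : Fin M → Fin Dhid → ℝ) : Fin M → Fin Dhid → ℝ := fun i =>
  H i + ∑ m : Fin Mh, (1 / (((i : ℕ) : ℝ) + 1)) •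
    ∑ j ∈ Finset.Iic i,
      relu (((heads m).Q *ᵥ H i) ⬝ᵥ ((heads m).K *ᵥ H j)) • ((heads m).V *ᵥ H j)

/-- MLP layer with residual connection. -/
def mlpLayer {Dhid : ℕ} (W1 W2 : Matrix (Fin Dhid) (Fin Dhid) ℝ) {M : ℕ}
    (H : Fin M → Fin Dhid → ℝ) : Fin M → Fin Dhid → ℝ := fun i =>
  H i + W2 *ᵥ reluV (W1 *ᵥ H i)

/-- One transformer block: a masked attention layer followed by an MLP layer. -/
structure TFLayer (Dhid : ℕ) where
  Mh : ℕ
  heads : Fin Mh → AttnHead Dhid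
  W1 : Matrix (Fin Dhid) (Fin Dhid) ℝ
  W2 : Matrix (Fin Dhid) (Fin Dhid) ℝ

/-- Apply one transformer block. -/
def TFLayer.apply {Dhid : ℕ} (l : TFLayer Dhid) {M : ℕ}
    (H : Fin M → Fin Dhid → ℝ) : Fin M → Fin Dhid → ℝ :=
  mlpLayer l.W1 l.W2 (attnLayer l.heads H)

/-- A decoder transformer: the composition of its blocks. -/
def tfApply {Dhid : ℕ} (layers : List (TFLayer Dhid)) {M : ℕ}
    (H : Fin M → Fin Dhid → ℝ) : Fin M → Fin Dhid → ℝ :=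
  layers.foldl (fun G l => TFLayer.apply l G) H

/-- The vector in `ℝ^Dhid` whose last `m` coordinates are given by `a` and whose
remaining coordinates vanish (zero padding). -/
def tailVec (Dhid : ℕ) {m : ℕ} (a : Fin m → ℝ) : Fin Dhid → ℝ := fun r =>
  if _ : Dhid ≤ (r : ℕ) + m then
    if h2 : (r : ℕ) + m - Dhid < m then a ⟨(r : ℕ) + m - Dhid, h2⟩ else 0
  else 0

/-- The positional encoding `p^x_i` (1-based math index `i`):
zero padding followed by `[1; 2i-1; (2i-1)²; (2i-1)³; i; i²; 1; i]`. -/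
def posXvec (Dhid : ℕ) (i : ℕ) : Fin Dhid → ℝ :=
  tailVec Dhid
    ![1, 2*(i:ℝ)-1, (2*(i:ℝ)-1)^2, (2*(i:ℝ)-1)^3, (i:ℝ), (i:ℝ)^2, 1, (i:ℝ)]

/-- The positional encoding `p^y_i`:
zero padding followed by `[1; 2i; (2i)²; (2i)³; i; i²; 0; 0]`. -/
def posYvec (Dhid : ℕ) (i : ℕ) : Fin Dhid → ℝ :=
  tailVec Dhid ![1, 2*(i:ℝ), (2*(i:ℝ))^2, (2*(i:ℝ))^3, (i:ℝ), (i:ℝ)^2, 0, 0]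

/-- Supervised token format with value block of width `D`: for 0-based example
index `i = t/2`, the x-token (even `t`) is `[zx i; 0; p^x_{i+1}]` and the
y-token (odd `t`) is `[zy i; y i; p^y_{i+1}]`. -/
def supFormat (Dhid D N : ℕ) (zx zy : ℕ → Fin D → ℝ) (y : ℕ → ℝ) :
    Fin (2*N) → Fin Dhid → ℝ := fun t r =>
  if h : (r : ℕ) < D then
    (if (t : ℕ) % 2 = 0 then zx ((t : ℕ)/2) ⟨(r : ℕ), h⟩ else zy ((t : ℕ)/2) ⟨(r : ℕ), h⟩)
  else if (r : ℕ) = D then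
    (if (t : ℕ) % 2 = 0 then 0 else y ((t : ℕ)/2))
  else if (t : ℕ) % 2 = 0 then posXvec Dhid ((t : ℕ)/2 + 1) r
  else posYvec Dhid ((t : ℕ)/2 + 1) r

/-- The supervised input format: `h_{2i-1} = [x_i; 0; p^x_i]`,
`h_{2i} = [0_d; y_i; p^y_i]`. -/
def supInput (Dhid d N : ℕ) (x : ℕ → Fin d → ℝ) (y : ℕ → ℝ) :
    Fin (2*N) → Fin Dhid → ℝ :=
  supFormat Dhid d N x (fun _ _ => 0) y

/-- The `(Bs.length + 1)`-layer leaky-ReLU MLP representation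
`Φ(v) = σ_ρ(B_L ⋯ σ_ρ(B_1 v) ⋯)`. -/
def mlpRep (ρ : ℝ) {din D : ℕ} (B1 : Matrix (Fin D) (Fin din) ℝ)
    (Bs : List (Matrix (Fin D) (Fin D) ℝ)) (v : Fin din → ℝ) : Fin D → ℝ :=
  Bs.foldl (fun u B => lreluV ρ (B *ᵥ u)) (lreluV ρ (B1 *ᵥ v))

/-- Ridge empirical risk over the first `n` samples
(equal to `λ/2 ‖w‖²` for `n = 0`, matching the convention `L̂_0 := 0`). -/
def ridgeLoss (lam : ℝ) {D : ℕ} (n : ℕ) (x : ℕ → Fin D → ℝ) (y : ℕ → ℝ)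
    (w : Fin D → ℝ) : ℝ :=
  (1/(2*(n:ℝ))) * ∑ j ∈ Finset.range n, (w ⬝ᵥ x j - y j)^2 + lam/2 * ∑ r, (w r)^2


/-- The positional encoding `p_i` of the dynamical input format (math index `i`):
zero padding followed by `[1; i; i²; i³]`. -/
def dynPos (Dhid : ℕ) (i : ℕ) : Fin Dhid → ℝ :=
  tailVec Dhid ![1, (i:ℝ), (i:ℝ)^2, (i:ℝ)^3]

/-- The dynamical input format: column `i` (0-based) is `[x_i; p_{i+1}]`. -/
def dynInput (Dhid d N : ℕ) (x : ℕ → Fin d → ℝ) : Fin N → Fin Dhid → ℝ :=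
  fun i r =>
    if h : (r : ℕ) < d then x (i : ℕ) ⟨(r : ℕ), h⟩ else dynPos Dhid ((i : ℕ) + 1) r

/-- The concatenation `x̄_i = [x_{i-k+1}; …; x_i] ∈ ℝ^{kd}` (0-based `i`), with
the convention that out-of-range (i.e. negative-index) entries are `0`. -/
def xbar (k d : ℕ) (x : ℕ → Fin d → ℝ) (i : ℕ) : Fin (k*d) → ℝ := fun r =>
  if h : k ≤ i + (r : ℕ)/d + 1 ∧ (r : ℕ) % d < d then
    x (i + (r : ℕ)/d + 1 - k) ⟨(r : ℕ) % d, h.2⟩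
  else 0

/-- The dynamical format after copying: column `i` is `[x̄_i; p̄_{i+1}]`. -/
def dynCopied (Dhid k d N : ℕ) (x : ℕ → Fin d → ℝ) : Fin N → Fin Dhid → ℝ :=
  fun i r =>
    if h : (r : ℕ) < k*d then xbar k d x (i : ℕ) ⟨(r : ℕ), h⟩
    else dynPos Dhid ((i : ℕ) + 1) r

lemma tailVec_apply {Dhid m : ℕ} (hm : m ≤ Dhid) (a : Fin m → ℝ) (t : Fin m) :
    tailVec Dhid a ⟨Dhid - m + (t : ℕ), by omega⟩ = a t := by
  have ht := t.isLt
  unfold tailVec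
  rw [dif_pos (by simp; omega), dif_pos (by simp; omega)]
  congr 1
  ext
  simp
  omega

lemma tailVec_eq_zero {Dhid m : ℕ} (a : Fin m → ℝ) (r : Fin Dhid)
    (h : (r : ℕ) + m < Dhid) : tailVec Dhid a r = 0 := dif_neg (by omega)

lemma tailVec_mul {Dhid m : ℕ} (hm : m ≤ Dhid) (a : Fin m → ℝ) (g : Fin Dhid → ℝ)
    (c : Fin Dhid) :
    tailVec Dhid a c * g c
      = tailVec Dhid (fun u : Fin m => a u * g ⟨Dhid - m + (u : ℕ), by omega⟩) c := by
  unfold tailVec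
  split
  · split
    · congr 2
      ext
      simp
      omega
    · ring
  · ring

lemma sum_tailVec {Dhid m : ℕ} (hm : m ≤ Dhid) (w : Fin m → ℝ) :
    ∑ r : Fin Dhid, tailVec Dhid w r = ∑ t, w t := by
  classical
  let e : Fin m ↪ Fin Dhid :=
    ⟨fun t => ⟨Dhid - m + (t : ℕ), by omega⟩, by
      intro a b hab
      have := congrArg (Fin.val) hab
      simp at this
      exact Fin.ext (by omega)⟩
  rw [show (∑ t, w t) = ∑ t, tailVec Dhid w (e t) from by
    refine Finset.sum_congr rfl fun t _ => ?_
    exact (tailVec_apply hm w t).symm]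
  rw [← Finset.sum_map Finset.univ e (tailVec Dhid w)]
  refine (Finset.sum_subset (Finset.subset_univ _) ?_).symm
  intro r _ hr
  refine tailVec_eq_zero w r ?_
  by_contra hcon
  apply hr
  simp only [Finset.mem_map, Finset.mem_univ, true_and]
  exact ⟨⟨(r : ℕ) + m - Dhid, by omega⟩, Fin.ext (by show Dhid - m + ((r : ℕ) + m - Dhid) = (r : ℕ); omega)⟩

lemma dot_tailVec {Dhid m : ℕ} (hm : m ≤ Dhid) (a : Fin m → ℝ) (g : Fin Dhid → ℝ) :
    tailVec Dhid a ⬝ᵥ g = ∑ u : Fin m, a u * g ⟨Dhid - m + (u : ℕ), by omega⟩ := by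
  unfold dotProduct
  rw [Finset.sum_congr rfl fun c _ => tailVec_mul hm a g c]
  exact sum_tailVec hm _

lemma tailVec_dot_tailVec {Dhid m : ℕ} (hm : m ≤ Dhid) (a b : Fin m → ℝ) :
    tailVec Dhid a ⬝ᵥ tailVec Dhid b = ∑ t, a t * b t := by
  rw [dot_tailVec hm]
  exact Finset.sum_congr rfl fun t _ => by rw [tailVec_apply hm]

/-- Matrix acting on the last-4 block via `A`. -/
def blk4 (Dhid : ℕ) (A : Fin 4 → Fin 4 → ℝ) : Matrix (Fin Dhid) (Fin Dhid) ℝ :=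
  fun r c => tailVec Dhid (fun u : Fin 4 => tailVec Dhid (fun t : Fin 4 => A t u) r) c

lemma tailVec_sum {Dhid m : ℕ} {ι : Type*} (S : Finset ι) (F : ι → Fin m → ℝ) (r : Fin Dhid) :
    ∑ u ∈ S, tailVec Dhid (F u) r = tailVec Dhid (fun t => ∑ u ∈ S, F u t) r := by
  unfold tailVec
  split
  · split <;> simp
  · simp

lemma tailVec_smul {Dhid m : ℕ} (a : Fin m → ℝ) (x : ℝ) (r : Fin Dhid) :
    tailVec Dhid a r * x = tailVec Dhid (fun t => a t * x) r := by
  unfold tailVec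
  split
  · split <;> simp
  · simp

lemma blk4_mulVec {Dhid : ℕ} (h4 : 4 ≤ Dhid) (A : Fin 4 → Fin 4 → ℝ) (h : Fin Dhid → ℝ) :
    blk4 Dhid A *ᵥ h
      = tailVec Dhid (fun t : Fin 4 => ∑ u : Fin 4, A t u * h ⟨Dhid - 4 + (u : ℕ), by omega⟩) := by
  funext r
  show (fun c => blk4 Dhid A r c) ⬝ᵥ h = _
  unfold blk4
  rw [dot_tailVec h4]
  rw [Finset.sum_congr rfl fun u _ => tailVec_smul _ _ r]
  rw [tailVec_sum]

/-- Value matrix copying coordinates `0..d-1` to `base..base+d-1`. -/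
def copyV (Dhid base d : ℕ) : Matrix (Fin Dhid) (Fin Dhid) ℝ :=
  fun r c => if (r : ℕ) = base + (c : ℕ) ∧ (c : ℕ) < d then 1 else 0

lemma copyV_mulVec {Dhid base d : ℕ} (hd : d ≤ Dhid) (h : Fin Dhid → ℝ) (r : Fin Dhid) :
    (copyV Dhid base d *ᵥ h) r
      = if hc : base ≤ (r : ℕ) ∧ (r : ℕ) < base + d then h ⟨(r : ℕ) - base, by omega⟩ else 0 := by
  show (fun c => copyV Dhid base d r c) ⬝ᵥ h = _
  unfold copyV dotProduct
  dsimp only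
  split
  · rename_i hc
    rw [Finset.sum_eq_single (⟨(r : ℕ) - base, by omega⟩ : Fin Dhid)]
    · rw [if_pos (by simp; omega), one_mul]
    · intro c _ hne
      rw [if_neg, zero_mul]
      rintro ⟨h1, h2⟩
      exact hne (Fin.ext (by simp only [Fin.val_mk]; omega))
    · intro hmem
      exact absurd (Finset.mem_univ _) hmem
  · rename_i hc
    refine Finset.sum_eq_zero fun c _ => ?_
    rw [if_neg, zero_mul]
    rintro ⟨h1, h2⟩
    omega

/-- The relu-score selection. -/
lemma relu_score (i j s : ℕ) :
    relu ((((i : ℕ) : ℝ) + 1) * (1 - (((i : ℕ) : ℝ) - (j : ℝ) - (s : ℝ)) ^ 2))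
      = if j + s = i then ((i : ℝ) + 1) else 0 := by
  split
  · rename_i hji
    have : ((i : ℝ) - (j : ℝ) - (s : ℝ)) = 0 := by
      have : ((j : ℝ) + (s : ℝ)) = (i : ℝ) := by exact_mod_cast congrArg (Nat.cast : ℕ → ℝ) hji
      linarith
    rw [this]
    simp [relu]
    positivity
  · rename_i hji
    have h1 : ((i : ℤ) - (j : ℤ) - (s : ℤ)) ≠ 0 := by omega
    have h2 : (1 : ℝ) ≤ ((i : ℝ) - (j : ℝ) - (s : ℝ)) ^ 2 := by
      have : ((i : ℝ) - (j : ℝ) - (s : ℝ)) = (((i : ℤ) - (j : ℤ) - (s : ℤ) : ℤ) : ℝ) := by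
        push_cast; ring
      rw [this, ← Int.cast_pow]
      have : (1 : ℤ) ≤ ((i : ℤ) - j - s) ^ 2 := by
        rcases lt_or_gt_of_ne h1 with h | h <;> nlinarith
      exact_mod_cast this
    have h3 : (((i : ℕ) : ℝ) + 1) * (1 - ((i : ℝ) - (j : ℝ) - (s : ℝ)) ^ 2) ≤ 0 := by
      have : (0 : ℝ) ≤ (i : ℝ) + 1 := by positivity
      nlinarith
    unfold relu
    exact max_eq_right h3

/-- Query coefficients for shift `s`. -/
def QA (s : ℕ) : Fin 4 → Fin 4 → ℝ :=
  ![![0,0,0,0], ![0, 1-(s:ℝ)^2, 2*(s:ℝ), -1], ![0, -(2*(s:ℝ)), 2, 0], ![0,-1,0,0]]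

/-- Key coefficients. -/
def KA : Fin 4 → Fin 4 → ℝ :=
  ![![0,0,0,0], ![1,0,0,0], ![0,1,0,0], ![0,0,1,0]]

lemma dynInput_tail {k d Dhid N : ℕ} (hk : 1 ≤ k) (hD : k*d + 4 ≤ Dhid)
    (x : ℕ → Fin d → ℝ) (i : Fin N) (u : Fin 4) :
    dynInput Dhid d N x i ⟨Dhid - 4 + (u : ℕ), by omega⟩
      = ![1, ((i:ℕ):ℝ)+1, (((i:ℕ):ℝ)+1)^2, (((i:ℕ):ℝ)+1)^3] u := by
  have hdk : d ≤ k * d := Nat.le_mul_of_pos_left d hk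
  unfold dynInput
  rw [dif_neg (by simp only [Fin.val_mk]; omega)]
  unfold dynPos
  have := tailVec_apply (Dhid := Dhid) (m := 4) (by omega) ![1, (((i:ℕ)+1 : ℕ):ℝ), (((i:ℕ)+1 : ℕ):ℝ)^2, (((i:ℕ)+1 : ℕ):ℝ)^3] u
  rw [this]
  push_cast
  rfl

lemma score_eq {k d Dhid N : ℕ} (hk : 1 ≤ k) (hD : k*d + 4 ≤ Dhid)
    (x : ℕ → Fin d → ℝ) (s : ℕ) (i j : Fin N) :
    (blk4 Dhid (QA s) *ᵥ dynInput Dhid d N x i) ⬝ᵥ (blk4 Dhid KA *ᵥ dynInput Dhid d N x j)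
      = (((i:ℕ):ℝ) + 1) * (1 - (((i:ℕ):ℝ) - ((j:ℕ):ℝ) - (s:ℝ)) ^ 2) := by
  have h4 : 4 ≤ Dhid := by omega
  rw [blk4_mulVec h4, blk4_mulVec h4, tailVec_dot_tailVec h4]
  have hi := fun u => dynInput_tail hk hD x i u
  have hj := fun u => dynInput_tail hk hD x j u
  simp only [Fin.sum_univ_four, hi, hj, QA, KA,
    Matrix.cons_val_zero, Matrix.cons_val_one, Matrix.cons_val_two, Matrix.cons_val_three,
    Matrix.head_cons, Matrix.tail_cons]
  ring

/-- Shift of head `m`: heads `0..k-1` fetch token `i-m`; head `k` fetches token `i`. -/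
def shiftOf (k : ℕ) (m : Fin (k+1)) : ℕ := if (m : ℕ) = k then 0 else (m : ℕ)

/-- Target block base of head `m`. -/
def baseOf (k d : ℕ) (m : Fin (k+1)) : ℕ := if (m : ℕ) = k then 0 else (k - 1 - (m : ℕ)) * d

/-- Sign of head `m` (head `k` subtracts). -/
def sgnOf (k : ℕ) (m : Fin (k+1)) : ℝ := if (m : ℕ) = k then -1 else 1
set_option maxHeartbeats 2000000 in
/-- **Copying for dynamical systems (Lemma `copy-dynamic`).**
Suppose `D_hid ≥ kd + 4`.  For any `k ≥ 1` there is a masked attention layer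
with `k+1` heads such that for every `N ≥ k` and every dynamical-format input,
the output column `i` equals `[x̄_i; p̄_i] = [x_{i-k+1}; …; x_{i-1}; x_i; p̄_i]`,
i.e. the layer copies the `k-1` previous tokens onto the `i`-th token (with the
convention `x_j := 0` for out-of-range `j`). -/
theorem attention_copy_dynamical (k d Dhid : ℕ) (hk : 1 ≤ k)
    (hDhid : k*d + 4 ≤ Dhid) :
    ∃ heads : Fin (k+1) → AttnHead Dhid,
      ∀ N : ℕ, k ≤ N →
        ∀ x : ℕ → Fin d → ℝ,
          attnLayer heads (dynInput Dhid d N x) = dynCopied Dhid k d N x := by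
  classical
  have hdk : d ≤ k * d := Nat.le_mul_of_pos_left d hk
  have hd : d ≤ Dhid := by omega
  refine ⟨fun m => ⟨blk4 Dhid (QA (shiftOf k m)), blk4 Dhid KA,
      sgnOf k m • copyV Dhid (baseOf k d m) d⟩, ?_⟩
  intro N hN x
  set H := dynInput Dhid d N x with hH
  funext i
  have hi1 : (0:ℝ) < ((i:ℕ):ℝ) + 1 := by positivity
  have key : ∀ m : Fin (k+1),
      (1 / (((i:ℕ):ℝ) + 1)) •
        ∑ j ∈ Finset.Iic i,
          relu ((blk4 Dhid (QA (shiftOf k m)) *ᵥ H i) ⬝ᵥ (blk4 Dhid KA *ᵥ H j)) •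
            ((sgnOf k m • copyV Dhid (baseOf k d m) d) *ᵥ H j)
      = (if hs : shiftOf k m ≤ (i:ℕ) then
          (sgnOf k m • copyV Dhid (baseOf k d m) d) *ᵥ
            H ⟨(i:ℕ) - shiftOf k m, by omega⟩
        else 0) := by
    intro m
    set s := shiftOf k m with hs_def
    set V := sgnOf k m • copyV Dhid (baseOf k d m) d with hV_def
    have hsc : ∀ j : Fin N,
        relu ((blk4 Dhid (QA s) *ᵥ H i) ⬝ᵥ (blk4 Dhid KA *ᵥ H j))
          = if (j:ℕ) + s = (i:ℕ) then (((i:ℕ):ℝ) + 1) else 0 := by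
      intro j
      rw [hH, score_eq hk hDhid x s i j, relu_score]
    by_cases hs : s ≤ (i:ℕ)
    · rw [dif_pos hs]
      have hj₀lt : (i:ℕ) - s < N := by omega
      set j₀ : Fin N := ⟨(i:ℕ) - s, hj₀lt⟩ with hj₀
      have hmem : j₀ ∈ Finset.Iic i := by
        rw [Finset.mem_Iic, Fin.le_def]
        simp only [hj₀, Fin.val_mk]
        omega
      rw [Finset.sum_eq_single_of_mem j₀ hmem ?_]
      · rw [hsc j₀, if_pos (by simp only [hj₀, Fin.val_mk]; omega), smul_smul,
          one_div_mul_cancel hi1.ne', one_smul]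
      · intro j _ hne
        rw [hsc j, if_neg, zero_smul]
        intro hcon
        exact hne (Fin.ext (by simp only [hj₀, Fin.val_mk]; omega))
    · rw [dif_neg hs]
      rw [Finset.sum_eq_zero, smul_zero]
      intro j _
      rw [hsc j, if_neg (by omega), zero_smul]
  funext r
  show H i r + (∑ m : Fin (k+1),
      (1 / (((i:ℕ):ℝ) + 1)) •
        ∑ j ∈ Finset.Iic i,
          relu ((blk4 Dhid (QA (shiftOf k m)) *ᵥ H i) ⬝ᵥ (blk4 Dhid KA *ᵥ H j)) •
            ((sgnOf k m • copyV Dhid (baseOf k d m) d) *ᵥ H j)) r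
    = dynCopied Dhid k d N x i r
  rw [Finset.sum_congr rfl fun m _ => key m, Finset.sum_apply]
  have hterm : ∀ m : Fin (k+1), shiftOf k m ≤ (i:ℕ) →
      ((sgnOf k m • copyV Dhid (baseOf k d m) d) *ᵥ
        H ⟨(i:ℕ) - shiftOf k m, by omega⟩) r
      = if hc : baseOf k d m ≤ (r:ℕ) ∧ (r:ℕ) < baseOf k d m + d
          then sgnOf k m * x ((i:ℕ) - shiftOf k m) ⟨(r:ℕ) - baseOf k d m, by omega⟩
          else 0 := by
    intro m hs
    rw [Matrix.smul_mulVec, Pi.smul_apply, smul_eq_mul, copyV_mulVec hd]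
    split
    · rename_i hc
      congr 1
      rw [hH]
      unfold dynInput
      rw [dif_pos (show ((⟨(r:ℕ) - baseOf k d m, by omega⟩ : Fin Dhid) : ℕ) < d by
        simp only [Fin.val_mk]; omega)]
    · rw [mul_zero]
  by_cases hr : (r:ℕ) < k*d
  · -- inside the copied block
    have hd0 : 0 < d := by
      rcases Nat.eq_zero_or_pos d with h0 | h0
      · exfalso; rw [h0, Nat.mul_zero] at hr; omega
      · exact h0
    obtain ⟨b, c, hmod, hclt, hb_def, hc_def⟩ :
        ∃ b c, d * b + c = (r:ℕ) ∧ c < d ∧ b = (r:ℕ)/d ∧ c = (r:ℕ)%d :=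
      ⟨_, _, Nat.div_add_mod _ _, Nat.mod_lt _ hd0, rfl, rfl⟩
    have hb : b < k := by rw [hb_def]; exact (Nat.div_lt_iff_lt_mul hd0).mpr hr
    rw [Fin.sum_univ_castSucc]
    -- castSucc heads properties
    have hcs : ∀ m : Fin k, shiftOf k m.castSucc = (m:ℕ) ∧
        baseOf k d m.castSucc = (k - 1 - (m:ℕ)) * d ∧ sgnOf k m.castSucc = 1 := by
      intro m
      have := m.isLt
      refine ⟨?_, ?_, ?_⟩ <;>
        simp only [shiftOf, baseOf, sgnOf, Fin.coe_castSucc, if_neg (by omega : ¬((m:ℕ) = k))]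
    have hlastv : shiftOf k (Fin.last k) = 0 ∧ baseOf k d (Fin.last k) = 0 ∧
        sgnOf k (Fin.last k) = -1 := by
      refine ⟨?_, ?_, ?_⟩ <;> simp [shiftOf, baseOf, sgnOf]
    set m₀ : Fin k := ⟨k - 1 - b, by omega⟩ with hm₀
    have hmain : ∑ m : Fin k,
        (if hs : shiftOf k m.castSucc ≤ (i:ℕ) then
          (sgnOf k m.castSucc • copyV Dhid (baseOf k d m.castSucc) d) *ᵥ
            H ⟨(i:ℕ) - shiftOf k m.castSucc, by omega⟩
        else 0) r
        = if k - 1 - b ≤ (i:ℕ) then x ((i:ℕ) - (k - 1 - b)) ⟨c, hclt⟩ else 0 := by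
      rw [Finset.sum_eq_single_of_mem m₀ (Finset.mem_univ _) ?_]
      · obtain ⟨hs1, hb1, hg1⟩ := hcs m₀
        have hm₀v : ((m₀ : Fin k) : ℕ) = k - 1 - b := rfl
        have hbb : k - 1 - (k - 1 - b) = b := by omega
        rw [hm₀v] at hs1 hb1
        rw [hbb] at hb1
        by_cases hio : k - 1 - b ≤ (i:ℕ)
        · rw [dif_pos (by rw [hs1]; exact hio), hterm _ (by rw [hs1]; exact hio)]
          rw [if_pos hio]
          have hcond : baseOf k d m₀.castSucc ≤ (r:ℕ) ∧ (r:ℕ) < baseOf k d m₀.castSucc + d := by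
            rw [hb1, Nat.mul_comm]
            omega
          rw [dif_pos hcond, hg1, one_mul, hs1]
          congr 1
          · ext
            simp only [Fin.val_mk]
            rw [hb1, Nat.mul_comm]
            omega
        · rw [dif_neg (by rw [hs1]; exact hio), if_neg hio]
          rfl
      · intro m _ hne
        by_cases hs : shiftOf k m.castSucc ≤ (i:ℕ)
        · rw [dif_pos hs, hterm _ hs]
          obtain ⟨hs1, hb1, hg1⟩ := hcs m
          rw [dif_neg]
          rw [hb1]
          rintro ⟨h1, h2⟩
          have hle : (k - 1 - (m:ℕ)) ≤ b := by
            rw [hb_def]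
            exact (Nat.le_div_iff_mul_le hd0).mpr h1
          have hlt : b < (k - 1 - (m:ℕ)) + 1 := by
            rw [hb_def]
            exact (Nat.div_lt_iff_lt_mul hd0).mpr (by rw [Nat.succ_mul]; omega)
          have := m.isLt
          exact hne (Fin.ext (by simp only [hm₀, Fin.val_mk]; omega))
        · rw [dif_neg hs]
          rfl
    rw [hmain]
    have hlast : (if hs : shiftOf k (Fin.last k) ≤ (i:ℕ) then
          (sgnOf k (Fin.last k) • copyV Dhid (baseOf k d (Fin.last k)) d) *ᵥ
            H ⟨(i:ℕ) - shiftOf k (Fin.last k), by omega⟩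
        else 0) r
        = if hrd : (r:ℕ) < d then -(x (i:ℕ) ⟨(r:ℕ), hrd⟩) else 0 := by
      obtain ⟨hs1, hb1, hg1⟩ := hlastv
      rw [dif_pos (by rw [hs1]; omega), hterm _ (by rw [hs1]; omega)]
      by_cases hrd : (r:ℕ) < d
      · rw [dif_pos (by rw [hb1]; omega), dif_pos hrd, hg1, neg_one_mul]
        have hargs : ∀ (a : ℕ) (_ : a = (i:ℕ)) (w : Fin d) (_ : w = ⟨(r:ℕ), hrd⟩),
            x a w = x (i:ℕ) ⟨(r:ℕ), hrd⟩ := by rintro a rfl w rfl; rfl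
        exact congrArg Neg.neg (hargs _ (by rw [hs1]; omega) _
          (Fin.ext (by simp only [Fin.val_mk]; rw [hb1]; omega)))
      · rw [dif_neg (by rw [hb1]; omega), dif_neg hrd]
    rw [hlast]
    have hHr : H i r = if hrd : (r:ℕ) < d then x (i:ℕ) ⟨(r:ℕ), hrd⟩ else 0 := by
      rw [hH]
      unfold dynInput
      split
      · rfl
      · unfold dynPos
        exact tailVec_eq_zero _ _ (by omega)
    rw [hHr]
    have hRHS : dynCopied Dhid k d N x i r
        = if k - 1 - b ≤ (i:ℕ) then x ((i:ℕ) + b + 1 - k) ⟨c, hclt⟩ else 0 := by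
      unfold dynCopied
      rw [dif_pos hr]
      unfold xbar
      simp only [Fin.val_mk]
      by_cases hcc : k ≤ (i:ℕ) + (r:ℕ)/d + 1 ∧ (r:ℕ)%d < d
      · rw [dif_pos hcc, if_pos (by omega)]
        have h1 : (i:ℕ) + (r:ℕ)/d + 1 - k = (i:ℕ) + b + 1 - k := by omega
        have h2 : (⟨(r:ℕ)%d, hcc.2⟩ : Fin d) = ⟨c, hclt⟩ :=
          Fin.ext (by simp only [Fin.val_mk]; omega)
        rw [h1, h2]
      · rw [dif_neg hcc, if_neg (by omega)]
    rw [hRHS]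
    by_cases hio : k - 1 - b ≤ (i:ℕ)
    · rw [if_pos hio, if_pos hio]
      have hxeq : x ((i:ℕ) - (k - 1 - b)) = x ((i:ℕ) + b + 1 - k) := by
        rw [show (i:ℕ) - (k - 1 - b) = (i:ℕ) + b + 1 - k from by omega]
      rw [hxeq]
      split
      · ring
      · ring
    · rw [if_neg hio, if_neg hio]
      split
      · ring
      · ring
  · -- outside the copied block
    have hbd : ∀ m : Fin (k+1), baseOf k d m + d ≤ k*d := by
      intro m
      unfold baseOf
      split
      · omega
      · have hmlt : (m:ℕ) < k := by have := m.isLt; rename_i hne; omega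
        have h1 : (k - 1 - (m:ℕ)) + 1 ≤ k := by omega
        calc (k - 1 - (m:ℕ))*d + d = ((k - 1 - (m:ℕ)) + 1)*d := by ring
          _ ≤ k*d := Nat.mul_le_mul_right d h1
    rw [Finset.sum_eq_zero]
    · rw [add_zero, hH]
      unfold dynInput
      rw [dif_neg (by omega)]
      unfold dynCopied
      rw [dif_neg hr]
    · intro m _
      by_cases hs : shiftOf k m ≤ (i:ℕ)
      · rw [dif_pos hs, hterm _ hs, dif_neg]
        have := hbd m
        omega
      · rw [dif_neg hs]
        rfl

end
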